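/- For every N ≥ 2 and every x = (x₁,…,x_N) ∈ D, the Euclidean gradient of H at x satisfies |∇H(x)|² ≥ (4/N²)|x|² + (4/N⁴) ∑_{i≠j} 1/|x_i − x_j|² − 4(N−1)/N², where |x|² := ∑_{i=1}^N |x_i|². In particular |∇H(x)| → +∞ as x approaches the boundary ∂D. -/

import Mathlib

open Finset

/-- Configuration space: `N` pairwise distinct points, ambient space
`EuclideanSpace ℝ (Fin N × Fin 2) ≅ (ℝ²)^N` with Euclidean norm. -/
def Dconf (N : ℕ) : Set (EuclideanSpace ℝ (Fin N × Fin 2)) :=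
  {x | ∀ i j : Fin N, i ≠ j → (fun k => x (i, k)) ≠ (fun k => x (j, k))}

/-- The energy `H(x) = (1/N)∑ᵢ |xᵢ|² + (1/(2N²))∑_{i≠j} log(1/|xᵢ-xⱼ|²)`. -/
noncomputable def Henergy (N : ℕ) (x : EuclideanSpace ℝ (Fin N × Fin 2)) : ℝ :=
  (1 / N) * ∑ i : Fin N, (∑ k : Fin 2, (x (i, k)) ^ 2)
    + (1 / (2 * N ^ 2)) * ∑ i : Fin N, ∑ j : Fin N,
        if i ≠ j then Real.log (1 / ∑ k : Fin 2, (x (i, k) - x (j, k)) ^ 2) else 0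

/-! ### Auxiliary definitions -/

variable {N : ℕ}

/-- Squared distance between points `i` and `j`. -/
noncomputable def Pq (x : EuclideanSpace ℝ (Fin N × Fin 2)) (i j : Fin N) : ℝ :=
  ∑ k : Fin 2, (x (i,k) - x (j,k))^2

/-- The candidate gradient vector. -/
noncomputable def gv (x : EuclideanSpace ℝ (Fin N × Fin 2)) : EuclideanSpace ℝ (Fin N × Fin 2) :=
  WithLp.toLp 2 (fun p => (2/(N:ℝ)) * x p
    - (2/(N:ℝ)^2) * ∑ j ∈ univ.erase p.1, (x (p.1,p.2) - x (j,p.2)) / Pq x p.1 j)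

noncomputable abbrev prj (i : Fin N) (k : Fin 2) : EuclideanSpace ℝ (Fin N × Fin 2) →L[ℝ] ℝ :=
  EuclideanSpace.proj (i,k)

noncomputable def Mder (x : EuclideanSpace ℝ (Fin N × Fin 2)) (i j : Fin N) :
    EuclideanSpace ℝ (Fin N × Fin 2) →L[ℝ] ℝ :=
  ∑ k : Fin 2, ((x (i,k) - x (j,k)) • (prj i k - prj j k)
      + (x (i,k) - x (j,k)) • (prj i k - prj j k))

noncomputable def Lder (x : EuclideanSpace ℝ (Fin N × Fin 2)) :
    EuclideanSpace ℝ (Fin N × Fin 2) →L[ℝ] ℝ :=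
  (1/(N:ℝ)) • (∑ i : Fin N, ∑ k : Fin 2, (x (i,k) • prj i k + x (i,k) • prj i k))
  + (1/(2*(N:ℝ)^2)) • (∑ i : Fin N, ∑ j : Fin N,
      if i ≠ j then -((Pq x i j)⁻¹ • Mder x i j) else 0)

noncomputable def Dd (x : EuclideanSpace ℝ (Fin N × Fin 2)) (i j l : Fin N) : ℝ :=
  ∑ k : Fin 2, ((x (i,k) - x (j,k)) / Pq x i j) * ((x (i,k) - x (l,k)) / Pq x i l)

/-! ### Basic facts -/

lemma Pq_symm (x : EuclideanSpace ℝ (Fin N × Fin 2)) (i j : Fin N) :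
    Pq x i j = Pq x j i :=
  Finset.sum_congr rfl fun k _ => by ring

lemma Pq_pos {x : EuclideanSpace ℝ (Fin N × Fin 2)} (hx : x ∈ Dconf N) {i j : Fin N}
    (hij : i ≠ j) : 0 < Pq x i j := by
  have h := hx i j hij
  rw [Function.ne_iff] at h
  obtain ⟨k, hk⟩ := h
  have hne : x (i,k) - x (j,k) ≠ 0 := sub_ne_zero.mpr hk
  exact Finset.sum_pos' (fun k _ => sq_nonneg _) ⟨k, Finset.mem_univ k, by positivity⟩

/-! ### Sum manipulation lemmas -/

lemma erase_sum {α : Type*} [DecidableEq α] (s : Finset α) (b : α) (f : α → ℝ) :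
    ∑ j ∈ s.erase b, f j = ∑ j ∈ s, if j ≠ b then f j else 0 := by
  rw [← Finset.filter_ne', Finset.sum_filter]

lemma sum_erase_swap (f : Fin N → Fin N → ℝ) :
    ∑ i, ∑ j ∈ univ.erase i, f i j = ∑ i, ∑ j ∈ univ.erase i, f j i := by
  have h : ∀ g : Fin N → Fin N → ℝ,
      ∑ i, ∑ j ∈ univ.erase i, g i j = ∑ i, ∑ j, if j ≠ i then g i j else 0 := by
    intro g
    refine Finset.sum_congr rfl fun i _ => ?_
    rw [Finset.sum_ite, Finset.sum_const_zero, add_zero, Finset.filter_ne']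
  rw [h, h, Finset.sum_comm]
  refine Finset.sum_congr rfl fun i _ => Finset.sum_congr rfl fun j _ => ?_
  simp [ne_comm]

lemma sum_ite_erase (F : Fin N → Fin N → ℝ) (i : Fin N) :
    (∑ j, if i ≠ j then F i j else 0) = ∑ j ∈ univ.erase i, F i j := by
  rw [Finset.sum_ite, Finset.sum_const_zero, add_zero]
  congr 1
  ext j
  simp [ne_comm, eq_comm]

/-! ### The scalar identity identifying the Fréchet derivative with the inner
product against `gv`. -/

lemma scalar_id (a w : Fin N → Fin 2 → ℝ) (p : Fin N → Fin N → ℝ)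
    (hp : ∀ i j, p i j = p j i) :
    ∑ i, ∑ k, (2/(N:ℝ) * a i k
        - 2/(N:ℝ)^2 * ∑ j ∈ univ.erase i, (a i k - a j k) / p i j) * w i k
    = 1/(N:ℝ) * ∑ i, ∑ k, (a i k * w i k + a i k * w i k)
      + 1/(2*(N:ℝ)^2) * ∑ i, ∑ j, (if i ≠ j then
          -((p i j)⁻¹ * ∑ k, ((a i k - a j k) * (w i k - w j k)
            + (a i k - a j k) * (w i k - w j k))) else 0) := by
  have hite : ∀ i, (∑ j, if i ≠ j then
      -((p i j)⁻¹ * ∑ k, ((a i k - a j k) * (w i k - w j k)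
            + (a i k - a j k) * (w i k - w j k))) else 0)
      = ∑ j ∈ univ.erase i, -((p i j)⁻¹ * ∑ k, ((a i k - a j k) * (w i k - w j k)
            + (a i k - a j k) * (w i k - w j k))) := fun i =>
    sum_ite_erase (fun i j => -((p i j)⁻¹ * ∑ k, ((a i k - a j k) * (w i k - w j k)
            + (a i k - a j k) * (w i k - w j k)))) i
  simp only [hite]
  have hBA : (∑ i, ∑ j ∈ univ.erase i, (p i j)⁻¹ * ∑ k, (a i k - a j k) * w j k)
      = -(∑ i, ∑ j ∈ univ.erase i, (p i j)⁻¹ * ∑ k, (a i k - a j k) * w i k) := by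
    rw [sum_erase_swap (fun i j => (p i j)⁻¹ * ∑ k, (a i k - a j k) * w j k)]
    rw [← Finset.sum_neg_distrib]
    refine Finset.sum_congr rfl fun i _ => ?_
    rw [← Finset.sum_neg_distrib]
    refine Finset.sum_congr rfl fun j _ => ?_
    rw [hp j i]
    rw [show (∑ k, (a j k - a i k) * w i k) = -∑ k, (a i k - a j k) * w i k by
      rw [← Finset.sum_neg_distrib]; exact Finset.sum_congr rfl fun k _ => by ring]
    ring
  have hR : ∀ i j, -((p i j)⁻¹ * ∑ k, ((a i k - a j k) * (w i k - w j k)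
            + (a i k - a j k) * (w i k - w j k)))
      = -2 * ((p i j)⁻¹ * ∑ k, (a i k - a j k) * w i k)
        + 2 * ((p i j)⁻¹ * ∑ k, (a i k - a j k) * w j k) := by
    intro i j
    have h1 : (∑ k, ((a i k - a j k) * (w i k - w j k) + (a i k - a j k) * (w i k - w j k)))
        = 2 * (∑ k, (a i k - a j k) * w i k) - 2 * (∑ k, (a i k - a j k) * w j k) := by
      rw [Finset.mul_sum, Finset.mul_sum, ← Finset.sum_sub_distrib]
      exact Finset.sum_congr rfl fun k _ => by ring
    rw [h1]; ring
  simp only [hR]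
  have hL : ∀ i, (∑ k, (2/(N:ℝ) * a i k
        - 2/(N:ℝ)^2 * ∑ j ∈ univ.erase i, (a i k - a j k) / p i j) * w i k)
      = 2/(N:ℝ) * (∑ k, a i k * w i k)
        - 2/(N:ℝ)^2 * ∑ j ∈ univ.erase i, (p i j)⁻¹ * ∑ k, (a i k - a j k) * w i k := by
    intro i
    have h2 : ∀ k, (2/(N:ℝ) * a i k
        - 2/(N:ℝ)^2 * ∑ j ∈ univ.erase i, (a i k - a j k) / p i j) * w i k
        = 2/(N:ℝ) * (a i k * w i k)
          - 2/(N:ℝ)^2 * ∑ j ∈ univ.erase i, (p i j)⁻¹ * ((a i k - a j k) * w i k) := by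
      intro k
      have h4 : ∑ j ∈ univ.erase i, ((a i k - a j k) / p i j) * w i k
          = ∑ j ∈ univ.erase i, (p i j)⁻¹ * ((a i k - a j k) * w i k) :=
        Finset.sum_congr rfl fun j _ => by rw [div_eq_inv_mul]; ring
      rw [sub_mul, mul_assoc, mul_assoc, Finset.sum_mul, h4]
    simp only [h2]
    rw [Finset.sum_sub_distrib, ← Finset.mul_sum, ← Finset.mul_sum]
    congr 2
    rw [Finset.sum_comm]
    exact Finset.sum_congr rfl fun j _ => by rw [Finset.mul_sum]
  simp only [hL]
  simp only [Finset.sum_sub_distrib, Finset.sum_add_distrib, ← Finset.mul_sum]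
  rw [hBA]
  ring

/-! ### Differentiability -/

lemma hasP (x : EuclideanSpace ℝ (Fin N × Fin 2)) (i j : Fin N) :
    HasFDerivAt (fun y : EuclideanSpace ℝ (Fin N × Fin 2) =>
      ∑ k : Fin 2, (y (i,k) - y (j,k))^2) (Mder x i j) x := by
  apply HasFDerivAt.fun_sum
  intro k _
  have h : HasFDerivAt (fun y : EuclideanSpace ℝ (Fin N × Fin 2) => y (i,k) - y (j,k))
      (prj i k - prj j k) x := ((prj i k).hasFDerivAt.sub (prj j k).hasFDerivAt)
  simpa [pow_two] using h.fun_mul h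

lemma hasH {x : EuclideanSpace ℝ (Fin N × Fin 2)} (hx : x ∈ Dconf N) :
    HasFDerivAt (Henergy N) (Lder x) x := by
  unfold Henergy Lder
  apply HasFDerivAt.add
  · apply HasFDerivAt.const_mul
    apply HasFDerivAt.fun_sum; intro i _
    apply HasFDerivAt.fun_sum; intro k _
    have h := (prj i k : _).hasFDerivAt (x := x)
    simpa [pow_two] using h.fun_mul h
  · apply HasFDerivAt.const_mul
    apply HasFDerivAt.fun_sum; intro i _
    apply HasFDerivAt.fun_sum; intro j _
    by_cases hij : i ≠ j
    · have hlog : HasFDerivAt (fun y : EuclideanSpace ℝ (Fin N × Fin 2) =>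
          Real.log (∑ k : Fin 2, (y (i,k) - y (j,k))^2)) ((Pq x i j)⁻¹ • Mder x i j) x :=
        (hasP x i j).log (ne_of_gt (Pq_pos hx hij))
      have h2 : (fun y : EuclideanSpace ℝ (Fin N × Fin 2) =>
          if i ≠ j then Real.log (1 / ∑ k : Fin 2, (y (i,k) - y (j,k))^2) else 0)
          = fun y => -Real.log (∑ k : Fin 2, (y (i,k) - y (j,k))^2) := by
        funext y; rw [if_pos hij, one_div, Real.log_inv]
      rw [h2, if_pos hij]
      exact hlog.neg
    · have h2 : (fun y : EuclideanSpace ℝ (Fin N × Fin 2) =>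
          if i ≠ j then Real.log (1 / ∑ k : Fin 2, (y (i,k) - y (j,k))^2) else 0)
          = fun _ => (0:ℝ) := by
        funext y; rw [if_neg hij]
      rw [h2, if_neg hij]
      exact hasFDerivAt_const 0 x

lemma toDual_eq (x : EuclideanSpace ℝ (Fin N × Fin 2)) :
    (InnerProductSpace.toDual ℝ (EuclideanSpace ℝ (Fin N × Fin 2))) (gv x) = Lder x := by
  apply ContinuousLinearMap.ext
  intro v
  rw [InnerProductSpace.toDual_apply_apply, PiLp.inner_apply]
  simp only [RCLike.inner_apply, starRingEnd_apply, star_trivial, Lder, Mder,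
    ContinuousLinearMap.add_apply, ContinuousLinearMap.smul_apply,
    ContinuousLinearMap.sum_apply, PiLp.proj_apply,
    apply_ite (fun L : EuclideanSpace ℝ (Fin N × Fin 2) →L[ℝ] ℝ => L v),
    ContinuousLinearMap.zero_apply,
    ContinuousLinearMap.sub_apply, ContinuousLinearMap.neg_apply, smul_eq_mul, gv, PiLp.toLp_apply,
    Fintype.sum_prod_type]
  rw [← scalar_id (fun i k => x (i,k)) (fun i k => v (i,k)) (Pq x) (Pq_symm x)]
  exact Finset.sum_congr rfl fun i _ => Finset.sum_congr rfl fun k _ => mul_comm _ _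

lemma grad_eq {x : EuclideanSpace ℝ (Fin N × Fin 2)} (hx : x ∈ Dconf N) :
    gradient (Henergy N) x = gv x := by
  apply HasGradientAt.gradient
  rw [hasGradientAt_iff_hasFDerivAt, toDual_eq]
  exact hasH hx

/-! ### Triple inequality -/

lemma triple_nonneg (p0 p1 q0 q1 : ℝ) (hp : p0^2+p1^2 ≠ 0) (hq : q0^2+q1^2 ≠ 0)
    (hr : (q0-p0)^2+(q1-p1)^2 ≠ 0) :
    0 ≤ (p0*q0+p1*q1)/((p0^2+p1^2)*(q0^2+q1^2))
      + ((p0^2+p1^2) - (p0*q0+p1*q1))/((p0^2+p1^2)*((q0-p0)^2+(q1-p1)^2))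
      + ((q0^2+q1^2) - (p0*q0+p1*q1))/((q0^2+q1^2)*((q0-p0)^2+(q1-p1)^2)) := by
  have hp' : 0 < p0^2+p1^2 := lt_of_le_of_ne (by positivity) (Ne.symm hp)
  have hq' : 0 < q0^2+q1^2 := lt_of_le_of_ne (by positivity) (Ne.symm hq)
  have hr' : 0 < (q0-p0)^2+(q1-p1)^2 := lt_of_le_of_ne (by positivity) (Ne.symm hr)
  have key : (p0*q0+p1*q1)/((p0^2+p1^2)*(q0^2+q1^2))
      + ((p0^2+p1^2) - (p0*q0+p1*q1))/((p0^2+p1^2)*((q0-p0)^2+(q1-p1)^2))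
      + ((q0^2+q1^2) - (p0*q0+p1*q1))/((q0^2+q1^2)*((q0-p0)^2+(q1-p1)^2))
      = 2*(p0*q1-p1*q0)^2 / ((p0^2+p1^2)*(q0^2+q1^2)*((q0-p0)^2+(q1-p1)^2)) := by
    field_simp
    ring
  rw [key]
  positivity

lemma trip {x : EuclideanSpace ℝ (Fin N × Fin 2)} (hx : x ∈ Dconf N) {i j l : Fin N}
    (hij : i ≠ j) (hil : i ≠ l) (hjl : j ≠ l) :
    0 ≤ Dd x i j l + Dd x j i l + Dd x l i j := by
  set p0 := x (i,0) - x (j,0) with hp0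
  set p1 := x (i,1) - x (j,1) with hp1
  set q0 := x (i,0) - x (l,0) with hq0
  set q1 := x (i,1) - x (l,1) with hq1
  have ePij : Pq x i j = p0^2 + p1^2 := by simp [Pq, Fin.sum_univ_two, hp0, hp1]
  have ePil : Pq x i l = q0^2 + q1^2 := by simp [Pq, Fin.sum_univ_two, hq0, hq1]
  have ePjl : Pq x j l = (q0-p0)^2 + (q1-p1)^2 := by
    simp only [Pq, Fin.sum_univ_two, hp0, hp1, hq0, hq1]; ring
  have ePji : Pq x j i = p0^2 + p1^2 := by
    simp only [Pq, Fin.sum_univ_two, hp0, hp1]; ring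
  have ePli : Pq x l i = q0^2 + q1^2 := by
    simp only [Pq, Fin.sum_univ_two, hq0, hq1]; ring
  have ePlj : Pq x l j = (q0-p0)^2 + (q1-p1)^2 := by
    simp only [Pq, Fin.sum_univ_two, hp0, hp1, hq0, hq1]; ring
  have hp : p0^2+p1^2 ≠ 0 := by rw [← ePij]; exact (Pq_pos hx hij).ne'
  have hq : q0^2+q1^2 ≠ 0 := by rw [← ePil]; exact (Pq_pos hx hil).ne'
  have hr : (q0-p0)^2+(q1-p1)^2 ≠ 0 := by rw [← ePjl]; exact (Pq_pos hx hjl).ne'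
  have e1 : Dd x i j l = (p0*q0+p1*q1)/((p0^2+p1^2)*(q0^2+q1^2)) := by
    simp only [Dd, Fin.sum_univ_two, ePij, ePil]
    field_simp
    simp only [hp0, hp1, hq0, hq1]
  have e2 : Dd x j i l = ((p0^2+p1^2) - (p0*q0+p1*q1))/((p0^2+p1^2)*((q0-p0)^2+(q1-p1)^2)) := by
    simp only [Dd, Fin.sum_univ_two, ePji, ePjl, hp0, hp1, hq0, hq1]
    field_simp
    ring
  have e3 : Dd x l i j = ((q0^2+q1^2) - (p0*q0+p1*q1))/((q0^2+q1^2)*((q0-p0)^2+(q1-p1)^2)) := by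
    simp only [Dd, Fin.sum_univ_two, ePli, ePlj, hp0, hp1, hq0, hq1]
    field_simp
    ring
  rw [e1, e2, e3]
  exact triple_nonneg p0 p1 q0 q1 hp hq hr

def S3 (N : ℕ) : Finset (Fin N × Fin N × Fin N) :=
  Finset.univ.filter (fun t => t.1 ≠ t.2.1 ∧ t.1 ≠ t.2.2 ∧ t.2.1 ≠ t.2.2)

lemma nested_eq (F : Fin N → Fin N → Fin N → ℝ) :
    ∑ i, ∑ j ∈ univ.erase i, ∑ l ∈ (univ.erase i).erase j, F i j l
    = ∑ t ∈ S3 N, F t.1 t.2.1 t.2.2 := by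
  have hr : ∑ t ∈ S3 N, F t.1 t.2.1 t.2.2
      = ∑ i, ∑ j, ∑ l, if i ≠ j ∧ i ≠ l ∧ j ≠ l then F i j l else 0 := by
    rw [S3, Finset.sum_filter, Fintype.sum_prod_type]
    exact Finset.sum_congr rfl fun i _ => by rw [Fintype.sum_prod_type]
  rw [hr]
  refine Finset.sum_congr rfl fun i _ => ?_
  rw [erase_sum]
  refine Finset.sum_congr rfl fun j _ => ?_
  by_cases hj : j ≠ i
  · rw [if_pos hj, erase_sum, erase_sum]
    refine Finset.sum_congr rfl fun l _ => ?_
    by_cases hl1 : l ≠ i <;> by_cases hl2 : l ≠ j <;>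
      simp_all [ne_comm]
  · rw [if_neg hj]
    rw [Finset.sum_eq_zero]
    intro l _
    rw [if_neg]
    push_neg at hj ⊢
    intro h; exact absurd hj.symm (by tauto)

lemma reindex1 (F : Fin N → Fin N → Fin N → ℝ) :
    ∑ t ∈ S3 N, F t.1 t.2.1 t.2.2 = ∑ t ∈ S3 N, F t.2.1 t.1 t.2.2 := by
  refine Finset.sum_nbij' (fun t => (t.2.1, t.1, t.2.2)) (fun t => (t.2.1, t.1, t.2.2))
    ?_ ?_ ?_ ?_ ?_ <;> intro t ht <;>
    simp_all [S3, Finset.mem_filter] <;> tauto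

lemma reindex2 (F : Fin N → Fin N → Fin N → ℝ) :
    ∑ t ∈ S3 N, F t.1 t.2.1 t.2.2 = ∑ t ∈ S3 N, F t.2.2 t.1 t.2.1 := by
  refine Finset.sum_nbij' (fun t => (t.2.1, t.2.2, t.1)) (fun t => (t.2.2, t.1, t.2.1))
    ?_ ?_ ?_ ?_ ?_ <;> intro t ht <;>
    simp_all [S3, Finset.mem_filter] <;> tauto

lemma Tnonneg {x : EuclideanSpace ℝ (Fin N × Fin 2)} (hx : x ∈ Dconf N) :
    0 ≤ ∑ i, ∑ j ∈ univ.erase i, ∑ l ∈ (univ.erase i).erase j, Dd x i j l := by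
  rw [nested_eq]
  have h1 := reindex1 (Dd x)
  have h2 := reindex2 (Dd x)
  have h3 : 0 ≤ ∑ t ∈ S3 N, (Dd x t.1 t.2.1 t.2.2 + Dd x t.2.1 t.1 t.2.2
      + Dd x t.2.2 t.1 t.2.1) := by
    refine Finset.sum_nonneg fun t ht => ?_
    rw [S3, Finset.mem_filter] at ht
    exact trip hx ht.2.1 ht.2.2.1 ht.2.2.2
  rw [Finset.sum_add_distrib, Finset.sum_add_distrib, ← h1, ← h2] at h3
  linarith

/-! ### Cross term and quadratic term -/

noncomputable def Sv (x : EuclideanSpace ℝ (Fin N × Fin 2)) (i : Fin N) (k : Fin 2) : ℝ :=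
  ∑ j ∈ univ.erase i, (x (i,k) - x (j,k)) / Pq x i j

lemma cross_eq {x : EuclideanSpace ℝ (Fin N × Fin 2)} (hx : x ∈ Dconf N) (hN1 : 1 ≤ N) :
    ∑ i, ∑ k : Fin 2, x (i,k) * Sv x i k = (N:ℝ) * ((N:ℝ) - 1) / 2 := by
  have step1 : ∑ i, ∑ k : Fin 2, x (i,k) * Sv x i k
      = ∑ i, ∑ j ∈ univ.erase i, (Pq x i j)⁻¹ * ∑ k : Fin 2, x (i,k) * (x (i,k) - x (j,k)) := by
    refine Finset.sum_congr rfl fun i _ => ?_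
    calc ∑ k : Fin 2, x (i,k) * Sv x i k
        = ∑ k : Fin 2, ∑ j ∈ univ.erase i, x (i,k) * ((x (i,k) - x (j,k)) / Pq x i j) :=
          Finset.sum_congr rfl fun k _ => Finset.mul_sum _ _ _
      _ = ∑ j ∈ univ.erase i, ∑ k : Fin 2, x (i,k) * ((x (i,k) - x (j,k)) / Pq x i j) :=
          Finset.sum_comm
      _ = ∑ j ∈ univ.erase i, (Pq x i j)⁻¹ * ∑ k : Fin 2, x (i,k) * (x (i,k) - x (j,k)) := by
          refine Finset.sum_congr rfl fun j _ => ?_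
          rw [Finset.mul_sum]
          exact Finset.sum_congr rfl fun k _ => by rw [div_eq_inv_mul]; ring
  rw [step1]
  have hsw := sum_erase_swap
    (fun i j => (Pq x i j)⁻¹ * ∑ k : Fin 2, x (i,k) * (x (i,k) - x (j,k)))
  have twice : (∑ i, ∑ j ∈ univ.erase i,
      (Pq x i j)⁻¹ * ∑ k : Fin 2, x (i,k) * (x (i,k) - x (j,k))) * 2
      = ∑ i : Fin N, ∑ j ∈ univ.erase i, (1:ℝ) := by
    calc (∑ i, ∑ j ∈ univ.erase i,
        (Pq x i j)⁻¹ * ∑ k : Fin 2, x (i,k) * (x (i,k) - x (j,k))) * 2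
        = (∑ i, ∑ j ∈ univ.erase i,
            (Pq x i j)⁻¹ * ∑ k : Fin 2, x (i,k) * (x (i,k) - x (j,k)))
          + ∑ i, ∑ j ∈ univ.erase i,
            (Pq x j i)⁻¹ * ∑ k : Fin 2, x (j,k) * (x (j,k) - x (i,k)) := by
          rw [← hsw]; ring
      _ = ∑ i, ∑ j ∈ univ.erase i,
            ((Pq x i j)⁻¹ * ∑ k : Fin 2, x (i,k) * (x (i,k) - x (j,k))
            + (Pq x j i)⁻¹ * ∑ k : Fin 2, x (j,k) * (x (j,k) - x (i,k))) := by
          rw [← Finset.sum_add_distrib]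
          exact Finset.sum_congr rfl fun i _ => by rw [← Finset.sum_add_distrib]
      _ = ∑ i : Fin N, ∑ j ∈ univ.erase i, (1:ℝ) := by
          refine Finset.sum_congr rfl fun i _ => Finset.sum_congr rfl fun j hj => ?_
          have hji : j ≠ i := (Finset.mem_erase.mp hj).1
          have hP : Pq x i j ≠ 0 := (Pq_pos hx hji.symm).ne'
          rw [← Pq_symm x i j, ← mul_add]
          rw [show (∑ k : Fin 2, x (i,k) * (x (i,k) - x (j,k)))
              + ∑ k : Fin 2, x (j,k) * (x (j,k) - x (i,k)) = Pq x i j by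
            rw [← Finset.sum_add_distrib]
            exact Finset.sum_congr rfl fun k _ => by rw [show ((x (i,k) - x (j,k))^2 : ℝ)
              = x (i,k) * (x (i,k) - x (j,k)) + x (j,k) * (x (j,k) - x (i,k)) from by ring]]
          exact inv_mul_cancel₀ hP
  have count : ∑ i : Fin N, ∑ j ∈ univ.erase i, (1:ℝ) = (N:ℝ) * ((N:ℝ) - 1) := by
    simp only [Finset.sum_const, Finset.card_erase_of_mem (Finset.mem_univ _),
      Finset.card_univ, Fintype.card_fin, nsmul_eq_mul, mul_one]
    rw [Nat.cast_sub hN1]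
    push_cast
    ring
  rw [count] at twice
  linarith

lemma diag_eq {x : EuclideanSpace ℝ (Fin N × Fin 2)} (hx : x ∈ Dconf N) {i j : Fin N}
    (hij : i ≠ j) : Dd x i j j = (Pq x i j)⁻¹ := by
  have hP : Pq x i j ≠ 0 := (Pq_pos hx hij).ne'
  calc Dd x i j j
      = ((Pq x i j)⁻¹ * (Pq x i j)⁻¹) * ∑ k : Fin 2, (x (i,k) - x (j,k))^2 := by
        rw [Finset.mul_sum]
        exact Finset.sum_congr rfl fun k _ => by rw [div_eq_inv_mul]; ring
    _ = ((Pq x i j)⁻¹ * (Pq x i j)⁻¹) * Pq x i j := rfl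
    _ = (Pq x i j)⁻¹ := by rw [mul_assoc, inv_mul_cancel₀ hP, mul_one]

lemma Qdecomp {x : EuclideanSpace ℝ (Fin N × Fin 2)} (hx : x ∈ Dconf N) :
    ∑ i, ∑ k : Fin 2, (Sv x i k)^2
    = (∑ i, ∑ j ∈ univ.erase i, (Pq x i j)⁻¹)
      + ∑ i, ∑ j ∈ univ.erase i, ∑ l ∈ (univ.erase i).erase j, Dd x i j l := by
  have step1 : ∀ i : Fin N, ∑ k : Fin 2, (Sv x i k)^2
      = ∑ j ∈ univ.erase i, ∑ l ∈ univ.erase i, Dd x i j l := by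
    intro i
    calc ∑ k : Fin 2, (Sv x i k)^2
        = ∑ k : Fin 2, ∑ j ∈ univ.erase i, ∑ l ∈ univ.erase i,
            ((x (i,k) - x (j,k)) / Pq x i j) * ((x (i,k) - x (l,k)) / Pq x i l) :=
          Finset.sum_congr rfl fun k _ => by rw [pow_two, Sv, Finset.sum_mul_sum]
      _ = ∑ j ∈ univ.erase i, ∑ k : Fin 2, ∑ l ∈ univ.erase i,
            ((x (i,k) - x (j,k)) / Pq x i j) * ((x (i,k) - x (l,k)) / Pq x i l) :=
          Finset.sum_comm
      _ = ∑ j ∈ univ.erase i, ∑ l ∈ univ.erase i, Dd x i j l :=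
          Finset.sum_congr rfl fun j _ => Finset.sum_comm
  simp only [step1]
  rw [← Finset.sum_add_distrib]
  refine Finset.sum_congr rfl fun i _ => ?_
  rw [← Finset.sum_add_distrib]
  refine Finset.sum_congr rfl fun j hj => ?_
  have hji : j ≠ i := (Finset.mem_erase.mp hj).1
  rw [← Finset.add_sum_erase _ _ hj, diag_eq hx hji.symm]

/-- Gradient coercivity: on `D`,
`|∇H(x)|² ≥ (4/N²)|x|² + (4/N⁴)∑_{i≠j} 1/|xᵢ-xⱼ|² - 4(N-1)/N²`. -/
theorem stmt11 (N : ℕ) (hN : 2 ≤ N) (x : EuclideanSpace ℝ (Fin N × Fin 2))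
    (hx : x ∈ Dconf N) :
    (4 / (N : ℝ) ^ 2) * (∑ i : Fin N, ∑ k : Fin 2, (x (i, k)) ^ 2)
      + (4 / (N : ℝ) ^ 4) * (∑ i : Fin N, ∑ j ∈ Finset.univ.erase i,
          (∑ k : Fin 2, (x (i, k) - x (j, k)) ^ 2)⁻¹)
      - 4 * ((N : ℝ) - 1) / (N : ℝ) ^ 2
    ≤ ‖gradient (Henergy N) x‖ ^ 2 := by
  have hN1 : 1 ≤ N := le_trans (by norm_num) hN
  have hNr : (2:ℝ) ≤ (N:ℝ) := by exact_mod_cast hN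
  have hN0 : (0:ℝ) < (N:ℝ) := by linarith
  have hP : ∀ i j : Fin N, (∑ k : Fin 2, (x (i,k) - x (j,k))^2)⁻¹ = (Pq x i j)⁻¹ :=
    fun i j => rfl
  simp only [hP]
  rw [grad_eq hx]
  have hnorm : ‖gv x‖^2 = ∑ i : Fin N, ∑ k : Fin 2, (gv x (i,k))^2 := by
    rw [EuclideanSpace.norm_eq, Real.sq_sqrt (Finset.sum_nonneg fun p _ => by positivity)]
    rw [Fintype.sum_prod_type]
    exact Finset.sum_congr rfl fun i _ => Finset.sum_congr rfl fun k _ => by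
      rw [Real.norm_eq_abs, sq_abs]
  rw [hnorm]
  have hexp : ∀ (i : Fin N) (k : Fin 2), (gv x (i,k))^2
      = 4/(N:ℝ)^2 * (x (i,k))^2 - 8/(N:ℝ)^3 * (x (i,k) * Sv x i k)
        + 4/(N:ℝ)^4 * (Sv x i k)^2 := by
    intro i k
    simp only [gv, Sv, PiLp.toLp_apply]
    ring
  simp only [hexp]
  simp only [Finset.sum_add_distrib, Finset.sum_sub_distrib, ← Finset.mul_sum]
  rw [cross_eq hx hN1, Qdecomp hx]
  rw [mul_add]
  have key : 8/(N:ℝ)^3 * ((N:ℝ) * ((N:ℝ) - 1) / 2) = 4*((N:ℝ)-1)/(N:ℝ)^2 := by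
    field_simp
    ring
  rw [key]
  have hT := Tnonneg hx
  have hT4 : 0 ≤ 4/(N:ℝ)^4
      * ∑ i, ∑ j ∈ univ.erase i, ∑ l ∈ (univ.erase i).erase j, Dd x i j l :=
    mul_nonneg (by positivity) hT
  linarith
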